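/- If an oriented, closed, connected n-manifold M admits a continuous self-map f : M → M with |deg f| ≥ 2, then M is ℓ¹-invisible: the image of the fundamental class [M] under the comparison map Hₙ(M;ℝ) → H^{ℓ¹}ₙ(M) is zero. Concretely, if z is a singular fundamental cycle and b a singular (n+1)-chain with ∂b = z − (1/deg f)·f_#(z), then b̄ = Σ_{k≥0} (deg f)^{−k} · (f_#)^k(b) converges in the ℓ¹-completion of the singular chain complex and ∂b̄ = z. -/

import Mathlib

open Filter UniformSpace

/-- ℓ¹-invisibility via self-maps of degree ≥ 2, chain level:
Let `C` be a normed chain complex (the singular chain complex of an oriented, closed,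
connected `n`-manifold `M`), `F` a chain endomorphism (induced by a self-map
`f : M → M`) that does not increase the ℓ¹-norm, and `dg` an integer with `|dg| ≥ 2`
(the degree of `f`).  If `z` is a cycle (a fundamental cycle of `M`) and `b` a chain
with `∂b = z − dg⁻¹ • F z` (which exists since `f_*[M] = dg·[M]`), then the series
`b̄ = Σₖ dg⁻ᵏ • Fᵏ b` converges in the ℓ¹-completion of the chain complex and
`∂b̄ = z`; hence the image of the fundamental class under the comparison map to
ℓ¹-homology is zero, i.e. `M` is ℓ¹-invisible. -/
theorem stmt16
    (C : ℕ → Type*) [∀ n, NormedAddCommGroup (C n)] [∀ n, NormedSpace ℝ (C n)]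
    (d : ∀ n, C (n + 1) →L[ℝ] C n)
    (hdd : ∀ n x, d n (d (n + 1) x) = 0)
    (F : ∀ n, C n →L[ℝ] C n)
    (hFchain : ∀ n x, F n (d n x) = d n (F (n + 1) x))
    (hFnorm : ∀ n x, ‖F n x‖ ≤ ‖x‖)
    (dg : ℤ) (hdg : 2 ≤ |dg|)
    (n : ℕ) (z : C (n + 1)) (hz : d n z = 0)
    (b : C (n + 2)) (hb : d (n + 1) b = z - ((dg : ℝ))⁻¹ • F (n + 1) z) :
    ∃ s : Completion (C (n + 2)),
      Tendsto
        (fun K => ((∑ k ∈ Finset.range K,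
          ((dg : ℝ)⁻¹) ^ k • (⇑(F (n + 2)))^[k] b : C (n + 2)) :
            Completion (C (n + 2)))) atTop (nhds s) ∧
      Tendsto
        (fun K => ((d (n + 1) (∑ k ∈ Finset.range K,
          ((dg : ℝ)⁻¹) ^ k • (⇑(F (n + 2)))^[k] b) : C (n + 1)) :
            Completion (C (n + 1)))) atTop
        (nhds ((z : C (n + 1)) : Completion (C (n + 1)))) := by
  set r : ℝ := ((dg : ℝ))⁻¹ with hr
  have habs : (2 : ℝ) ≤ |(dg : ℝ)| := by
    rw [← Int.cast_abs]; exact_mod_cast hdg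
  have hdg0 : (dg : ℝ) ≠ 0 := by
    intro h; rw [h] at habs; simp at habs; linarith
  have hrle : |r| ≤ 2⁻¹ := by
    rw [hr, abs_inv]
    exact inv_anti₀ (by norm_num) habs
  -- iterates do not increase norms
  have hiter : ∀ m k (x : C m), ‖(⇑(F m))^[k] x‖ ≤ ‖x‖ := by
    intro m k
    induction k with
    | zero => intro x; simp
    | succ k ih =>
      intro x
      rw [Function.iterate_succ_apply]
      exact (ih _).trans (hFnorm m x)
  -- iterates are linear: they agree with powers of the CLM
  have hpow : ∀ m k (x : C m), (⇑(F m))^[k] x = ((F m) ^ k) x := by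
    intro m k
    induction k with
    | zero => intro x; simp
    | succ k ih =>
      intro x
      rw [Function.iterate_succ_apply, ih, ← ContinuousLinearMap.mul_apply, ← pow_succ]
  -- boundary commutes with iterates
  have hd_iter : ∀ k (x : C (n + 2)),
      d (n + 1) ((⇑(F (n + 2)))^[k] x) = (⇑(F (n + 1)))^[k] (d (n + 1) x) := by
    intro k
    induction k with
    | zero => intro x; simp
    | succ k ih =>
      intro x
      rw [Function.iterate_succ_apply, ih, Function.iterate_succ_apply, hFchain]
  -- telescoping identity
  have htel : ∀ K, d (n + 1) (∑ k ∈ Finset.range K, r ^ k • (⇑(F (n + 2)))^[k] b)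
      = z - r ^ K • (⇑(F (n + 1)))^[K] z := by
    intro K
    induction K with
    | zero => simp
    | succ K ih =>
      rw [Finset.sum_range_succ, map_add, ih, map_smul, hd_iter, hb]
      have h1 : (⇑(F (n + 1)))^[K] (z - r • F (n + 1) z)
          = (⇑(F (n + 1)))^[K] z - r • (⇑(F (n + 1)))^[K + 1] z := by
        rw [hpow, hpow, hpow, map_sub, map_smul, ← ContinuousLinearMap.mul_apply,
          ← pow_succ]
      rw [h1, smul_sub, smul_smul, ← pow_succ]
      abel
  -- convergence of the series in the completion
  have hsum : Summable (fun k : ℕ =>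
      ((r ^ k • (⇑(F (n + 2)))^[k] b : C (n + 2)) : Completion (C (n + 2)))) := by
    apply Summable.of_norm_bounded (g := fun k => (2⁻¹ : ℝ) ^ k * ‖b‖)
    · exact (summable_geometric_of_lt_one (by norm_num) (by norm_num)).mul_right _
    · intro k
      rw [Completion.norm_coe, norm_smul, norm_pow]
      have := hiter (n + 2) k b
      calc |r| ^ k * ‖(⇑(F (n + 2)))^[k] b‖ ≤ |r| ^ k * ‖b‖ := by
            apply mul_le_mul_of_nonneg_left this (by positivity)
        _ ≤ (2⁻¹ : ℝ) ^ k * ‖b‖ := by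
            apply mul_le_mul_of_nonneg_right _ (norm_nonneg _)
            exact pow_le_pow_left₀ (abs_nonneg _) hrle k
  obtain ⟨s, hs⟩ := hsum
  refine ⟨s, ?_, ?_⟩
  · have := hs.tendsto_sum_nat
    convert this using 2 with K
    exact map_sum (UniformSpace.Completion.toCompl (α := C (n + 2))) _ _
  · have key : ∀ K, ((d (n + 1) (∑ k ∈ Finset.range K, r ^ k • (⇑(F (n + 2)))^[k] b)
        : C (n + 1)) : Completion (C (n + 1)))
        = ((z - r ^ K • (⇑(F (n + 1)))^[K] z : C (n + 1)) : Completion (C (n + 1))) := by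
      intro K; rw [htel]
    simp only [key]
    have hlim : Tendsto (fun K => (z - r ^ K • (⇑(F (n + 1)))^[K] z : C (n + 1)))
        atTop (nhds z) := by
      have h0 : Tendsto (fun K => (r ^ K • (⇑(F (n + 1)))^[K] z : C (n + 1)))
          atTop (nhds 0) := by
        rw [tendsto_zero_iff_norm_tendsto_zero]
        apply squeeze_zero (fun K => norm_nonneg _) (g := fun K => (2⁻¹ : ℝ) ^ K * ‖z‖)
        · intro K
          rw [norm_smul, norm_pow]
          calc |r| ^ K * ‖(⇑(F (n + 1)))^[K] z‖ ≤ |r| ^ K * ‖z‖ := by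
                apply mul_le_mul_of_nonneg_left (hiter _ _ _) (by positivity)
            _ ≤ (2⁻¹ : ℝ) ^ K * ‖z‖ := by
                apply mul_le_mul_of_nonneg_right _ (norm_nonneg _)
                exact pow_le_pow_left₀ (abs_nonneg _) hrle K
        · simpa using (tendsto_pow_atTop_nhds_zero_of_lt_one (by norm_num)
            (by norm_num : (2⁻¹ : ℝ) < 1)).mul_const ‖z‖
      simpa using h0.const_sub z
    exact ((Completion.continuous_coe (C (n + 1))).tendsto z).comp hlim
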